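/- Let f : ℝ^{n1×n2} → ℝ be differentiable and (L, 2r)-restricted smooth for some L > 0. Let B ∈ ℝ^{n1×r} and R ∈ ℝ^{n2×r}, set X := B Rᵀ, let λ > 0, and set P := RᵀR + λ I_r (which is symmetric positive definite). Let D := ∇f(X) R P^{-1} and let 0 < η ≤ 1/L. Suppose there exist µ > 0 and f⋆ ∈ ℝ such that ‖∇f(X) R P^{-1/2}‖_F² ≥ (µ²/(6L)) (f(X) − f⋆). Then f((B − η D) Rᵀ) − f⋆ ≤ (1 − (η − L η²/2) µ²/(6L)) (f(X) − f⋆). -/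

import Mathlib

open Matrix

/-- Frobenius inner product of two real matrices. -/
noncomputable def finner {m n : Type*} [Fintype m] [Fintype n]
    (A B : Matrix m n ℝ) : ℝ := (Aᵀ * B).trace

/-- Frobenius norm of a real matrix. -/
noncomputable def fnorm {m n : Type*} [Fintype m] [Fintype n]
    (A : Matrix m n ℝ) : ℝ := Real.sqrt (finner A A)

open scoped Classical in
/-- Square root of a positive semidefinite real matrix (junk value `0` otherwise). -/
noncomputable def psqrt {r : ℕ} (M : Matrix (Fin r) (Fin r) ℝ) : Matrix (Fin r) (Fin r) ℝ :=
  if h : M.PosSemidef then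
    h.1.eigenvectorUnitary.1 * diagonal (Real.sqrt ∘ h.1.eigenvalues) *
      (star h.1.eigenvectorUnitary : Matrix (Fin r) (Fin r) ℝ)
  else 0

lemma finner_self_nonneg {m n : Type*} [Fintype m] [Fintype n]
    (A : Matrix m n ℝ) : 0 ≤ finner A A := by
  unfold finner
  rw [Matrix.trace]
  refine Finset.sum_nonneg fun j _ => ?_
  simp only [Matrix.diag_apply, Matrix.mul_apply, Matrix.transpose_apply]
  exact Finset.sum_nonneg fun i _ => mul_self_nonneg _

lemma fnorm_sq {m n : Type*} [Fintype m] [Fintype n]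
    (A : Matrix m n ℝ) : fnorm A ^ 2 = finner A A :=
  Real.sq_sqrt (finner_self_nonneg A)

lemma finner_smul_right {m n : Type*} [Fintype m] [Fintype n]
    (c : ℝ) (A B : Matrix m n ℝ) : finner A (c • B) = c * finner A B := by
  unfold finner
  rw [Matrix.mul_smul, Matrix.trace_smul, smul_eq_mul]

lemma finner_smul_left {m n : Type*} [Fintype m] [Fintype n]
    (c : ℝ) (A B : Matrix m n ℝ) : finner (c • A) B = c * finner A B := by
  unfold finner
  rw [Matrix.transpose_smul, Matrix.smul_mul, Matrix.trace_smul, smul_eq_mul]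

set_option maxHeartbeats 1000000 in
/-- per-half-iteration contraction underlying the paper's Theorem 1,
matrix form.  Given restricted smoothness and a PL-type inequality in the damped
preconditioned norm, one damped-preconditioned factor update contracts the loss gap. -/
theorem stmt_3 {n1 n2 r : ℕ}
    (f : Matrix (Fin n1) (Fin n2) ℝ → ℝ)
    (gradf : Matrix (Fin n1) (Fin n2) ℝ → Matrix (Fin n1) (Fin n2) ℝ)
    (L : ℝ) (hL : 0 < L)
    (hdiff : ∀ X H : Matrix (Fin n1) (Fin n2) ℝ,
      HasDerivAt (fun t : ℝ => f (X + t • H)) (finner (gradf X) H) 0)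
    (hsmooth : ∀ X1 X2 : Matrix (Fin n1) (Fin n2) ℝ, X1.rank ≤ 2 * r → X2.rank ≤ 2 * r →
      f X2 ≤ f X1 + finner (gradf X1) (X2 - X1) + L / 2 * fnorm (X2 - X1) ^ 2)
    (B : Matrix (Fin n1) (Fin r) ℝ) (R : Matrix (Fin n2) (Fin r) ℝ)
    (X : Matrix (Fin n1) (Fin n2) ℝ) (hX : X = B * Rᵀ)
    (lam : ℝ) (hlam : 0 < lam)
    (P : Matrix (Fin r) (Fin r) ℝ) (hP : P = Rᵀ * R + lam • (1 : Matrix (Fin r) (Fin r) ℝ))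
    (D : Matrix (Fin n1) (Fin r) ℝ) (hD : D = gradf X * R * P⁻¹)
    (η : ℝ) (hη0 : 0 < η) (hη : η ≤ 1 / L)
    (μ fstar : ℝ) (hμ : 0 < μ)
    (hPL : fnorm (gradf X * R * (psqrt P)⁻¹) ^ 2 ≥ μ ^ 2 / (6 * L) * (f X - fstar)) :
    f ((B - η • D) * Rᵀ) - fstar ≤
      (1 - (η - L * η ^ 2 / 2) * μ ^ 2 / (6 * L)) * (f X - fstar) := by
  classical
  set G := gradf X with hG
  -- P is positive definite
  have hPposdef : P.PosDef := by
    rw [hP]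
    refine Matrix.PosDef.posSemidef_add ?_ ?_
    · have := Matrix.posSemidef_conjTranspose_mul_self R
      rwa [Matrix.conjTranspose_eq_transpose_of_trivial] at this
    · exact Matrix.PosDef.one.smul hlam
  have hPsd : P.PosSemidef := hPposdef.posSemidef
  set S := psqrt P with hSn
  have hSdef : S = hPsd.1.eigenvectorUnitary.1 * diagonal (Real.sqrt ∘ hPsd.1.eigenvalues) *
      (star hPsd.1.eigenvectorUnitary : Matrix (Fin r) (Fin r) ℝ) := dif_pos hPsd
  have hSS : S * S = P := by
    have hU : (star hPsd.1.eigenvectorUnitary : Matrix (Fin r) (Fin r) ℝ) *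
        hPsd.1.eigenvectorUnitary.1 = 1 := Matrix.UnitaryGroup.star_mul_self _
    rw [hSdef]
    conv_rhs => rw [hPsd.1.spectral_theorem, Unitary.conjStarAlgAut_apply]
    calc _ = hPsd.1.eigenvectorUnitary.1 * diagonal (Real.sqrt ∘ hPsd.1.eigenvalues) *
          ((star hPsd.1.eigenvectorUnitary : Matrix (Fin r) (Fin r) ℝ) *
            hPsd.1.eigenvectorUnitary.1) * diagonal (Real.sqrt ∘ hPsd.1.eigenvalues) *
          (star hPsd.1.eigenvectorUnitary : Matrix (Fin r) (Fin r) ℝ) := by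
            simp only [Matrix.mul_assoc]
      _ = _ := by
        rw [hU, Matrix.mul_one, Matrix.mul_assoc _ (diagonal _) (diagonal _), Matrix.diagonal_mul_diagonal]
        congr 3
        funext i
        simp [Real.mul_self_sqrt (hPsd.eigenvalues_nonneg i)]
  have hSsym : Sᵀ = S := by
    rw [hSdef, ← Matrix.conjTranspose_eq_transpose_of_trivial]
    simp [Matrix.conjTranspose_mul, Matrix.mul_assoc, Matrix.star_eq_conjTranspose]
  have hPsymm : Pᵀ = P := by
    rw [← Matrix.conjTranspose_eq_transpose_of_trivial]
    exact hPposdef.isHermitian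
  have hPdet : IsUnit P.det := isUnit_iff_ne_zero.2 (ne_of_gt hPposdef.det_pos)
  have hSdet : IsUnit S.det := by
    have hm : S.det * S.det = P.det := by rw [← Matrix.det_mul, hSS]
    refine isUnit_iff_ne_zero.2 fun h0 => ?_
    rw [h0, mul_zero] at hm
    exact (isUnit_iff_ne_zero.1 hPdet) hm.symm
  have hPinvP : P⁻¹ * P = 1 := Matrix.nonsing_inv_mul P hPdet
  have hPinvEq : P⁻¹ = S⁻¹ * S⁻¹ := by rw [← hSS, Matrix.mul_inv_rev]
  have hSinvT : S⁻¹ᵀ = S⁻¹ := by rw [Matrix.transpose_nonsing_inv, hSsym]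
  have hPinvT : P⁻¹ᵀ = P⁻¹ := by rw [Matrix.transpose_nonsing_inv, hPsymm]
  -- rank bounds
  have hrank : ∀ M : Matrix (Fin n1) (Fin r) ℝ, (M * Rᵀ).rank ≤ 2 * r := fun M =>
    calc (M * Rᵀ).rank ≤ Rᵀ.rank := Matrix.rank_mul_le_right _ _
      _ ≤ Fintype.card (Fin r) := Matrix.rank_le_card_height _
      _ = r := Fintype.card_fin r
      _ ≤ 2 * r := Nat.le_mul_of_pos_left r (by norm_num)
  -- the key scalar quantity
  set T0 : ℝ := (Rᵀ * (Gᵀ * (G * (R * P⁻¹)))).trace with hT0def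
  -- (1) the PL norm squared equals T0
  have hN : finner (G * R * S⁻¹) (G * R * S⁻¹) = T0 := by
    unfold finner
    simp only [Matrix.transpose_mul, hSinvT, Matrix.mul_assoc]
    rw [Matrix.trace_mul_comm]
    simp only [Matrix.mul_assoc]
    rw [hT0def, hPinvEq]
  -- (2) finner G (D * Rᵀ) = T0
  have hI1 : finner G (D * Rᵀ) = T0 := by
    unfold finner
    rw [hD]
    simp only [Matrix.mul_assoc]
    rw [Matrix.trace_mul_comm]
    simp only [Matrix.mul_assoc]
    rw [Matrix.trace_mul_comm]
    simp only [Matrix.mul_assoc]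
    rw [Matrix.trace_mul_comm]
    simp only [Matrix.mul_assoc]
    rw [Matrix.trace_mul_comm]
    simp only [Matrix.mul_assoc]
    exact hT0def.symm
  -- (3) Q := finner (D*Rᵀ) (D*Rᵀ)
  have hQ : finner (D * Rᵀ) (D * Rᵀ) = (Dᵀ * (D * (Rᵀ * R))).trace := by
    unfold finner
    simp only [Matrix.transpose_mul, Matrix.transpose_transpose, Matrix.mul_assoc]
    rw [Matrix.trace_mul_comm]
    simp only [Matrix.mul_assoc]
  have hT : (Dᵀ * (D * P)).trace = T0 := by
    rw [hD]
    simp only [Matrix.transpose_mul, hPinvT, Matrix.mul_assoc, hPinvP, Matrix.mul_one]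
    rw [Matrix.trace_mul_comm]
    simp only [Matrix.mul_assoc]
    exact hT0def.symm
  have hsplit : (Dᵀ * (D * P)).trace
      = (Dᵀ * (D * (Rᵀ * R))).trace + lam * (Dᵀ * D).trace := by
    rw [hP]
    simp [Matrix.mul_add, Matrix.mul_smul, Matrix.trace_add, Matrix.trace_smul, smul_eq_mul,
      Matrix.mul_one]
  have hDD : 0 ≤ (Dᵀ * D).trace := finner_self_nonneg D
  have hQle : finner (D * Rᵀ) (D * Rᵀ) ≤ T0 := by
    rw [hQ, ← hT, hsplit]
    nlinarith
  -- smoothness application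
  have hXr : X.rank ≤ 2 * r := by rw [hX]; exact hrank B
  have hX2r : ((B - η • D) * Rᵀ).rank ≤ 2 * r := hrank _
  have hsm := hsmooth X ((B - η • D) * Rᵀ) hXr hX2r
  have hdiffX : (B - η • D) * Rᵀ - X = (-η) • (D * Rᵀ) := by
    rw [hX, Matrix.sub_mul, Matrix.smul_mul, sub_sub_cancel_left, neg_smul]
  rw [hdiffX, ← hG, finner_smul_right, hI1, fnorm_sq] at hsm
  have hsq : finner ((-η) • (D * Rᵀ)) ((-η) • (D * Rᵀ))
      = η ^ 2 * finner (D * Rᵀ) (D * Rᵀ) := by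
    rw [finner_smul_left, finner_smul_right]; ring
  rw [hsq] at hsm
  -- PL inequality in terms of T0
  have hT0ge : T0 ≥ μ ^ 2 / (6 * L) * (f X - fstar) := by
    rw [← hN, ← fnorm_sq]
    exact hPL
  -- finish
  have hLη : L * η ≤ 1 := by
    rw [le_div_iff₀ hL] at hη
    linarith
  have hc : 0 ≤ η - L * η ^ 2 / 2 := by nlinarith
  set q : ℝ := finner (D * Rᵀ) (D * Rᵀ) with hqdef
  clear_value q
  clear_value T0
  have hQ2 : L / 2 * (η ^ 2 * q) ≤ L / 2 * η ^ 2 * T0 := by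
    have h0 : (0:ℝ) ≤ L / 2 * η ^ 2 := by positivity
    have := mul_le_mul_of_nonneg_left hQle h0
    linarith
  have key2 : (η - L * η ^ 2 / 2) * (μ ^ 2 / (6 * L) * (f X - fstar))
      ≤ (η - L * η ^ 2 / 2) * T0 := mul_le_mul_of_nonneg_left hT0ge hc
  have hrhs : (1 - (η - L * η ^ 2 / 2) * μ ^ 2 / (6 * L)) * (f X - fstar)
      = (f X - fstar) - (η - L * η ^ 2 / 2) * (μ ^ 2 / (6 * L) * (f X - fstar)) := by
    ring
  rw [hrhs]
  linarith [hsm, hQ2, key2]
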